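/- For each λ ≥ 1, the polynomial Σ_{k=1}^n Π_{j=1}^m (x − z_j^{(k)} τ^{2k−n−1}) · f_λ^{((n−1)m)}(x τ^{n+1−2k} | z^{(n)}τ, …, z^{(k+1)}τ, z^{(k−1)}τ^{−1}, …, z^{(1)}τ^{−1}) is divisible by x in the polynomial ring ℂ[x, z_j^{(k)}], and the quotient A_λ^{(m)}(x | z^{(n)}|…|z^{(1)}) is a homogeneous polynomial of total degree m + λ − 1 which is symmetric in the m variables of each group z^{(k)} separately. -/

import Mathlib

noncomputable section

/-- The `k`-th elementary symmetric function of the entries of a list. -/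
def esymL {R : Type*} [CommRing R] (l : List R) (k : ℕ) : R :=
  ((l.sublistsLen k).map List.prod).sum

/-- `f_λ^{(N)}(y | z₁,…,z_N)` where the variables are given as a list; the
deformation parameter `τ` and its inverse `τi` are passed separately so that
the definition makes sense over any commutative ring.  By the empty-sum
convention, `f_λ = 0` for `λ = 0`. -/
def fgenL {R : Type*} [CommRing R] (τ τi y : R) (lam : ℕ) (l : List R) : R :=
  ∑ κ ∈ Finset.range lam,
    (-1 : R) ^ κ * ((y * τ) ^ (lam - κ) - (y * τi) ^ (lam - κ)) * esymL l κ

/-- `τ ^ a` for an integer exponent `a`, negative powers being interpreted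
via the inverse `τi` of `τ`. -/
def mixpow {R : Type*} [CommRing R] (τ τi : R) (a : ℤ) : R :=
  if 0 ≤ a then τ ^ a.toNat else τi ^ (-a).toNat

/-- The argument list `z^{(n)}τ, …, z^{(k+1)}τ, z^{(k-1)}τ⁻¹, …, z^{(1)}τ⁻¹`
(the group `z^{(k)}` omitted); the group `z^{(k)}` is `Z (k-1)` (0-based). -/
def argList {R : Type*} [CommRing R] (n m : ℕ) (τ τi : R)
    (Z : Fin n → Fin m → R) (k : Fin n) : List R :=
  (((List.finRange n).reverse.filter (fun g => k < g)).map
      (fun g => (List.finRange m).map (fun j => Z g j * τ))).flatten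
  ++ (((List.finRange n).reverse.filter (fun g => g < k)).map
      (fun g => (List.finRange m).map (fun j => Z g j * τi))).flatten

/-- `x · A_λ^{(m)}(x | z^{(n)} | ⋯ | z^{(1)})`, i.e. the polynomial
`Σ_{k=1}^n Π_{j=1}^m (x - z_j^{(k)} τ^{2k-n-1}) ·
  f_λ^{((n-1)m)}(x τ^{n+1-2k} | z^{(n)}τ, …, z^{(k+1)}τ, z^{(k-1)}τ⁻¹, …, z^{(1)}τ⁻¹)`,
the group `z^{(k)}` being `Z (k-1)` (0-based). -/
def numerA {R : Type*} [CommRing R] (n m : ℕ) (τ τi : R) (lam : ℕ) (x : R)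
    (Z : Fin n → Fin m → R) : R :=
  ∑ k : Fin n,
    (∏ j : Fin m, (x - Z k j * mixpow τ τi (2 * ((k : ℕ) : ℤ) + 1 - (n : ℤ)))) *
      fgenL τ τi (x * mixpow τ τi ((n : ℤ) - (2 * ((k : ℕ) : ℤ) + 1))) lam
        (argList n m τ τi Z k)

-- auxiliary lemmas

lemma sublistsLen_map' {α β : Type*} (f : α → β) : ∀ (n : ℕ) (l : List α),
    (l.map f).sublistsLen n = (l.sublistsLen n).map (List.map f)
  | 0, l => by simp
  | n+1, [] => by simp
  | n+1, a :: l => by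
    simp [List.sublistsLen_succ_cons, sublistsLen_map' f (n+1) l, sublistsLen_map' f n l,
      List.map_map, Function.comp_def]

lemma esymL_map {R S : Type*} [CommRing R] [CommRing S] (φ : R →+* S) (l : List R) (k : ℕ) :
    φ (esymL l k) = esymL (l.map φ) k := by
  unfold esymL
  rw [sublistsLen_map', List.map_map, map_list_sum, List.map_map]
  congr 1
  refine List.map_congr_left fun s _ => ?_
  simp [Function.comp_def, map_list_prod]

lemma esymL_eq_esymm {R : Type*} [CommRing R] (l : List R) (k : ℕ) :
    esymL l k = Multiset.esymm ↑l k := by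
  unfold esymL Multiset.esymm
  rw [Multiset.powersetCard_coe]
  simp [Multiset.map_coe, List.map_map, Function.comp_def]

lemma esymL_perm {R : Type*} [CommRing R] {l l' : List R} (h : l.Perm l') (k : ℕ) :
    esymL l k = esymL l' k := by
  rw [esymL_eq_esymm, esymL_eq_esymm, Multiset.coe_eq_coe.2 h]

lemma fgenL_perm {R : Type*} [CommRing R] (τ τi y : R) (lam : ℕ) {l l' : List R}
    (h : l.Perm l') : fgenL τ τi y lam l = fgenL τ τi y lam l' :=
  Finset.sum_congr rfl fun κ _ => by rw [esymL_perm h]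

lemma fgenL_map {R S : Type*} [CommRing R] [CommRing S] (φ : R →+* S) (τ τi y : R)
    (lam : ℕ) (l : List R) :
    φ (fgenL τ τi y lam l) = fgenL (φ τ) (φ τi) (φ y) lam (l.map φ) := by
  unfold fgenL
  rw [map_sum]
  refine Finset.sum_congr rfl fun κ _ => ?_
  rw [map_mul, map_mul, map_pow, map_neg, map_one, map_sub, map_pow, map_pow, map_mul,
    map_mul, esymL_map]

lemma mixpow_map {R S : Type*} [CommRing R] [CommRing S] (φ : R →+* S) (τ τi : R) (a : ℤ) :
    φ (mixpow τ τi a) = mixpow (φ τ) (φ τi) a := by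
  unfold mixpow; split_ifs <;> rw [map_pow]

lemma argList_map {R S : Type*} [CommRing R] [CommRing S] (φ : R →+* S) (n m : ℕ)
    (τ τi : R) (Z : Fin n → Fin m → R) (k : Fin n) :
    (argList n m τ τi Z k).map φ = argList n m (φ τ) (φ τi) (fun g j => φ (Z g j)) k := by
  unfold argList
  simp [List.map_flatten, List.map_map, Function.comp_def]

lemma numerA_map {R S : Type*} [CommRing R] [CommRing S] (φ : R →+* S) (n m : ℕ)
    (τ τi : R) (lam : ℕ) (x : R) (Z : Fin n → Fin m → R) :
    φ (numerA n m τ τi lam x Z)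
      = numerA n m (φ τ) (φ τi) lam (φ x) (fun g j => φ (Z g j)) := by
  unfold numerA
  rw [map_sum]
  refine Finset.sum_congr rfl fun k _ => ?_
  rw [map_mul, map_prod, fgenL_map, map_mul, mixpow_map, argList_map]
  simp [mixpow_map]

lemma fgenL_factor {R : Type*} [CommRing R] (τ τi x d : R) (lam : ℕ) (hlam : 1 ≤ lam)
    (l : List R) :
    fgenL τ τi (x * d) lam l
      = x * ∑ κ ∈ Finset.range lam, (-1 : R) ^ κ * x ^ (lam - 1 - κ) *
          ((d * τ) ^ (lam - κ) - (d * τi) ^ (lam - κ)) * esymL l κ := by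
  unfold fgenL
  rw [Finset.mul_sum]
  refine Finset.sum_congr rfl fun κ hκ => ?_
  rw [Finset.mem_range] at hκ
  have h1 : lam - κ = (lam - 1 - κ) + 1 := by omega
  rw [h1]
  ring

def quotA {R : Type*} [CommRing R] (n m : ℕ) (τ τi : R) (lam : ℕ) (x : R)
    (Z : Fin n → Fin m → R) : R :=
  ∑ k : Fin n,
    (∏ j : Fin m, (x - Z k j * mixpow τ τi (2 * ((k : ℕ) : ℤ) + 1 - (n : ℤ)))) *
      ∑ κ ∈ Finset.range lam, (-1 : R) ^ κ * x ^ (lam - 1 - κ) *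
        ((mixpow τ τi ((n : ℤ) - (2 * ((k : ℕ) : ℤ) + 1)) * τ) ^ (lam - κ)
          - (mixpow τ τi ((n : ℤ) - (2 * ((k : ℕ) : ℤ) + 1)) * τi) ^ (lam - κ)) *
        esymL (argList n m τ τi Z k) κ

lemma numerA_eq_mul {R : Type*} [CommRing R] (n m : ℕ) (τ τi : R) (lam : ℕ)
    (hlam : 1 ≤ lam) (x : R) (Z : Fin n → Fin m → R) :
    numerA n m τ τi lam x Z = x * quotA n m τ τi lam x Z := by
  unfold numerA quotA
  rw [Finset.mul_sum]
  refine Finset.sum_congr rfl fun k _ => ?_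
  rw [fgenL_factor _ _ _ _ lam hlam]
  ring

-- permutation invariance

lemma finRange_map_perm {m : ℕ} (σ : Equiv.Perm (Fin m)) :
    ((List.finRange m).map σ).Perm (List.finRange m) := by
  refine (List.perm_ext_iff_of_nodup ((List.nodup_finRange m).map σ.injective)
    (List.nodup_finRange m)).2 fun a => ?_
  simp only [List.mem_map, List.mem_finRange, iff_true]
  exact ⟨σ.symm a, trivial, by simp⟩

lemma map_comp_perm {R : Type*} [CommRing R] {m : ℕ} (σ : Equiv.Perm (Fin m)) (h : Fin m → R) :
    ((List.finRange m).map (fun j => h (σ j))).Perm ((List.finRange m).map h) := by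
  have e : (List.finRange m).map (fun j => h (σ j)) = ((List.finRange m).map σ).map h := by
    rw [List.map_map]; rfl
  rw [e]
  exact (finRange_map_perm σ).map h

lemma flatten_perm_aux {R : Type*} [CommRing R] {n m : ℕ} (Z : Fin n → Fin m → R)
    (k : Fin n) (σ : Equiv.Perm (Fin m)) (w : R) (L : List (Fin n)) :
    ((L.map (fun g => (List.finRange m).map
        (fun j => (if g = k then Z g (σ j) else Z g j) * w))).flatten).Perm
      ((L.map (fun g => (List.finRange m).map (fun j => Z g j * w))).flatten) := by
  apply List.Perm.flatten_congr
  rw [List.forall₂_map_left_iff, List.forall₂_map_right_iff, List.forall₂_same]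
  intro g _
  by_cases hg : g = k
  · subst hg
    simp only [eq_self_iff_true, if_true]
    exact map_comp_perm σ (fun j => Z g j * w)
  · simp [hg]

lemma argList_perm {R : Type*} [CommRing R] (n m : ℕ) (τ τi : R)
    (Z : Fin n → Fin m → R) (k k' : Fin n) (σ : Equiv.Perm (Fin m)) :
    (argList n m τ τi (fun g j => if g = k then Z g (σ j) else Z g j) k').Perm
      (argList n m τ τi Z k') := by
  unfold argList
  exact List.Perm.append (flatten_perm_aux Z k σ τ _) (flatten_perm_aux Z k σ τi _)

lemma numerA_swap {R : Type*} [CommRing R] (n m : ℕ) (τ τi : R) (lam : ℕ) (x : R)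
    (Z : Fin n → Fin m → R) (k : Fin n) (σ : Equiv.Perm (Fin m)) :
    numerA n m τ τi lam x (fun g j => if g = k then Z g (σ j) else Z g j)
      = numerA n m τ τi lam x Z := by
  unfold numerA
  refine Finset.sum_congr rfl fun k' _ => ?_
  rw [fgenL_perm _ _ _ _ (argList_perm n m τ τi Z k k' σ)]
  congr 1
  by_cases hk : k' = k
  · subst hk
    simp only [if_pos rfl]
    exact Equiv.prod_comp σ (fun j => x - Z k' j * mixpow τ τi (2 * ((k' : ℕ) : ℤ) + 1 - n))
  · simp [hk]

-- homogeneity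

open MvPolynomial in
lemma isHomog_listSum {σ : Type*} (L : List (MvPolynomial σ ℂ)) (d : ℕ)
    (h : ∀ p ∈ L, p.IsHomogeneous d) : L.sum.IsHomogeneous d := by
  induction L with
  | nil => simpa using isHomogeneous_zero σ ℂ d
  | cons a L ih =>
    rw [List.sum_cons]
    exact (h a (by simp)).add (ih fun p hp => h p (by simp [hp]))

open MvPolynomial in
lemma isHomog_listProd {σ : Type*} (L : List (MvPolynomial σ ℂ))
    (h : ∀ p ∈ L, p.IsHomogeneous 1) : L.prod.IsHomogeneous L.length := by
  induction L with
  | nil => simpa using isHomogeneous_one σ ℂ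
  | cons a L ih =>
    rw [List.prod_cons, List.length_cons]
    have := (h a (by simp)).mul (ih fun p hp => h p (by simp [hp]))
    rwa [add_comm] at this

open MvPolynomial in
lemma esymL_isHomog {σ : Type*} (L : List (MvPolynomial σ ℂ))
    (h : ∀ p ∈ L, p.IsHomogeneous 1) (k : ℕ) : (esymL L k).IsHomogeneous k := by
  unfold esymL
  apply isHomog_listSum
  intro p hp
  simp only [List.mem_map] at hp
  obtain ⟨s, hs, rfl⟩ := hp
  obtain ⟨hsub, hlen⟩ := List.mem_sublistsLen.1 hs
  rw [← hlen]
  exact isHomog_listProd s fun p hp => h p (hsub.subset hp)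

open MvPolynomial in
lemma mixpow_isHomog {σ : Type*} (a b : ℂ) (e : ℤ) :
    (mixpow (C a) (C b) e : MvPolynomial σ ℂ).IsHomogeneous 0 := by
  unfold mixpow
  split_ifs <;> rw [← C_pow] <;> exact isHomogeneous_C _ _

open MvPolynomial in
lemma argList_mem {R : Type*} [CommRing R] {n m : ℕ} {τ τi : R} {Z : Fin n → Fin m → R}
    {k : Fin n} {p : R} (hp : p ∈ argList n m τ τi Z k) :
    ∃ g j, p = Z g j * τ ∨ p = Z g j * τi := by
  unfold argList at hp
  rw [List.mem_append] at hp
  rcases hp with hp | hp <;>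
  · rw [List.mem_flatten] at hp
    obtain ⟨L, hL, hpL⟩ := hp
    rw [List.mem_map] at hL
    obtain ⟨g, -, rfl⟩ := hL
    rw [List.mem_map] at hpL
    obtain ⟨j, -, rfl⟩ := hpL
    first
    | exact ⟨g, j, Or.inl rfl⟩
    | exact ⟨g, j, Or.inr rfl⟩

/-- for `λ ≥ 1` the polynomial
`Σ_{k=1}^n Π_{j=1}^m (x - z_j^{(k)} τ^{2k-n-1}) f_λ^{((n-1)m)}(xτ^{n+1-2k} | …)`
is divisible by `x` in `ℂ[x, z_j^{(k)}]`, and the quotient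
`A_λ^{(m)}(x | z^{(n)} | ⋯ | z^{(1)})` is a homogeneous polynomial of total
degree `m + λ - 1`, symmetric in the `m` variables of each group `z^{(k)}`
separately.  Here the variable `none` is `x` and `some (k, j)` is `z_j^{(k+1)}`. -/
theorem A_polynomial_exists (n m : ℕ) (hn : 2 ≤ n) (hm : 1 ≤ m)
    (q : ℂ) (hq : q ≠ 0) (lam : ℕ) (hlam : 1 ≤ lam) :
    ∃ A : MvPolynomial (Option (Fin n × Fin m)) ℂ,
      numerA n m (MvPolynomial.C q⁻¹) (MvPolynomial.C q) lam
          (MvPolynomial.X none) (fun k j => MvPolynomial.X (some (k, j)))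
        = MvPolynomial.X none * A
      ∧ A.IsHomogeneous (m + lam - 1)
      ∧ ∀ (k : Fin n) (σ : Equiv.Perm (Fin m)),
          MvPolynomial.rename
            (Option.map (fun p : Fin n × Fin m => if p.1 = k then (p.1, σ p.2) else p)) A
            = A := by
  classical
  open MvPolynomial in
  set Zf : Fin n → Fin m → MvPolynomial (Option (Fin n × Fin m)) ℂ :=
    fun k j => X (some (k, j)) with hZf
  set A : MvPolynomial (Option (Fin n × Fin m)) ℂ :=
    quotA n m (C q⁻¹) (C q) lam (X none) Zf with hA
  have hfac : numerA n m (C q⁻¹) (C q) lam (X none) Zf = X none * A :=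
    numerA_eq_mul n m _ _ lam hlam _ Zf
  refine ⟨A, hfac, ?_, ?_⟩
  · -- homogeneity
    have hdeg : m + lam - 1 = m + (lam - 1) := by omega
    rw [hdeg, hA]
    unfold quotA
    apply MvPolynomial.IsHomogeneous.sum
    intro k _
    apply MvPolynomial.IsHomogeneous.mul
    · have := MvPolynomial.IsHomogeneous.prod Finset.univ
        (fun j : Fin m => X none - Zf k j * mixpow (C q⁻¹) (C q)
          (2 * ((k : ℕ) : ℤ) + 1 - (n : ℤ))) (fun _ => 1)
        (fun j _ => (isHomogeneous_X _ _).sub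
          (by simpa using (isHomogeneous_X _ _).mul (mixpow_isHomog _ _ _)))
      simpa using this
    · apply MvPolynomial.IsHomogeneous.sum
      intro κ hκ
      rw [Finset.mem_range] at hκ
      have h1 : ((-1 : MvPolynomial (Option (Fin n × Fin m)) ℂ) ^ κ).IsHomogeneous 0 := by
        rw [show ((-1 : MvPolynomial (Option (Fin n × Fin m)) ℂ)) = C (-1) by simp, ← C_pow]
        exact isHomogeneous_C _ _
      have h2 : ((X none : MvPolynomial (Option (Fin n × Fin m)) ℂ) ^ (lam - 1 - κ)).IsHomogeneous
          (lam - 1 - κ) := by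
        simpa using (isHomogeneous_X ℂ (none : Option (Fin n × Fin m))).pow (lam - 1 - κ)
      have h3 : (((mixpow (C q⁻¹) (C q) ((n : ℤ) - (2 * ((k : ℕ) : ℤ) + 1)) * C q⁻¹) ^ (lam - κ)
          - (mixpow (C q⁻¹) (C q) ((n : ℤ) - (2 * ((k : ℕ) : ℤ) + 1)) * C q) ^ (lam - κ)
            : MvPolynomial (Option (Fin n × Fin m)) ℂ)).IsHomogeneous 0 := by
        refine MvPolynomial.IsHomogeneous.sub ?_ ?_ <;>
          simpa using ((mixpow_isHomog _ _ _).mul (isHomogeneous_C _ _)).pow (lam - κ)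
      have h4 : (esymL (argList n m (C q⁻¹) (C q) Zf k) κ).IsHomogeneous κ := by
        apply esymL_isHomog
        intro p hp
        obtain ⟨g, j, hp | hp⟩ := argList_mem hp <;> rw [hp] <;>
          simpa using (isHomogeneous_X ℂ (some (g, j) : Option (Fin n × Fin m))).mul
            (isHomogeneous_C _ _)
      have := ((h1.mul h2).mul h3).mul h4
      have he : 0 + (lam - 1 - κ) + 0 + κ = lam - 1 := by omega
      rwa [he] at this
  · -- symmetry
    intro k σ
    set f : Fin n × Fin m → Fin n × Fin m :=
      fun p => if p.1 = k then (p.1, σ p.2) else p with hf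
    have key0 := numerA_map ((MvPolynomial.rename (R := ℂ) (Option.map f)).toRingHom)
      n m (C q⁻¹) (C q) lam (X none) Zf
    simp only [AlgHom.toRingHom_eq_coe, RingHom.coe_coe, MvPolynomial.rename_C,
      MvPolynomial.rename_X, Option.map_none] at key0
    have e4 : (fun (g : Fin n) (j : Fin m) =>
        MvPolynomial.rename (R := ℂ) (Option.map f) (Zf g j))
          = fun g j => if g = k then Zf g (σ j) else Zf g j := by
      funext g j
      simp only [hZf, MvPolynomial.rename_X, Option.map_some]
      by_cases hg : g = k <;> simp [hf, hg]
    rw [e4, numerA_swap] at key0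
    have key : MvPolynomial.rename (Option.map f)
        (numerA n m (C q⁻¹) (C q) lam (X none) Zf)
          = numerA n m (C q⁻¹) (C q) lam (X none) Zf := key0
    rw [hfac, map_mul] at key
    have ex : MvPolynomial.rename (Option.map f) (X none : MvPolynomial (Option (Fin n × Fin m)) ℂ)
        = X none := by simp
    rw [ex] at key
    exact mul_left_cancel₀ (MvPolynomial.X_ne_zero none) key
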